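/- Let a, D, λ > 0 and define t_c := (a²/(πD))·(√(1 + 1/(4a³λ)) − 1)². Then t_c > 0 and 4πλDa·t_c + 8a²λ√(πD·t_c) = 1; consequently 1 − exp(−4πλDa·t_c − 8a²λ√(πD·t_c)) = 1 − 1/e. Moreover, t_c is the unique t ≥ 0 with 4πλDa·t + 8a²λ√(πDt) = 1. -/

import Mathlib

/-- Remark 1: the time constant `t_c = (a²/(πD))(√(1 + 1/(4a³λ)) − 1)²` is positive,
satisfies `4πλDa·t_c + 8a²λ√(πD·t_c) = 1` (hence the hitting probability at `t_c`
equals `1 − 1/e`), and is the unique nonnegative solution of that equation. -/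
theorem time_constant (a D lam : ℝ) (ha : 0 < a) (hD : 0 < D) (hlam : 0 < lam)
    (tc : ℝ)
    (htc : tc = a ^ 2 / (Real.pi * D) *
      (Real.sqrt (1 + 1 / (4 * a ^ 3 * lam)) - 1) ^ 2) :
    0 < tc ∧
    4 * Real.pi * lam * D * a * tc + 8 * a ^ 2 * lam * Real.sqrt (Real.pi * D * tc) = 1 ∧
    1 - Real.exp (-(4 * Real.pi * lam * D * a * tc)
        - 8 * a ^ 2 * lam * Real.sqrt (Real.pi * D * tc)) = 1 - 1 / Real.exp 1 ∧
    ∀ t : ℝ, 0 ≤ t →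
      4 * Real.pi * lam * D * a * t + 8 * a ^ 2 * lam * Real.sqrt (Real.pi * D * t) = 1 →
      t = tc := by
  have hpi : 0 < Real.pi := Real.pi_pos
  set s := Real.sqrt (1 + 1 / (4 * a ^ 3 * lam)) with hs
  have harg : (1:ℝ) < 1 + 1 / (4 * a ^ 3 * lam) := by
    have : 0 < 1 / (4 * a ^ 3 * lam) := by positivity
    linarith
  have hs1 : 1 < s := by
    rw [hs]
    nlinarith [Real.sq_sqrt (by linarith : (0:ℝ) ≤ 1 + 1 / (4 * a ^ 3 * lam)),
      Real.sqrt_nonneg (1 + 1 / (4 * a ^ 3 * lam))]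
  have hs2 : s ^ 2 = 1 + 1 / (4 * a ^ 3 * lam) := Real.sq_sqrt (by linarith)
  have htcpos : 0 < tc := by
    rw [htc]
    apply mul_pos (by positivity)
    nlinarith
  have hsqrt : Real.sqrt (Real.pi * D * tc) = a * (s - 1) := by
    have h1 : Real.pi * D * tc = (a * (s - 1)) ^ 2 := by
      rw [htc]; field_simp
    rw [h1, Real.sqrt_sq (by nlinarith)]
  have heq : 4 * Real.pi * lam * D * a * tc
      + 8 * a ^ 2 * lam * Real.sqrt (Real.pi * D * tc) = 1 := by
    have hh : 4 * a ^ 3 * lam * s ^ 2 = 4 * a ^ 3 * lam + 1 := by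
      rw [hs2]; field_simp
    have key : 4 * a ^ 3 * lam * (s - 1) ^ 2 + 8 * a ^ 3 * lam * (s - 1) = 1 := by
      linear_combination hh
    rw [hsqrt, htc]
    have hpiD : Real.pi * D ≠ 0 := by positivity
    field_simp
    linear_combination key
  refine ⟨htcpos, heq, ?_, ?_⟩
  · have : -(4 * Real.pi * lam * D * a * tc)
        - 8 * a ^ 2 * lam * Real.sqrt (Real.pi * D * tc) = -1 := by linarith
    rw [this, Real.exp_neg, one_div]
  · intro t ht heqt
    have hu : 0 ≤ Real.sqrt (Real.pi * D * t) := Real.sqrt_nonneg _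
    have hv : 0 ≤ Real.sqrt (Real.pi * D * tc) := Real.sqrt_nonneg _
    have hu2 : Real.sqrt (Real.pi * D * t) ^ 2 = Real.pi * D * t :=
      Real.sq_sqrt (by positivity)
    have hv2 : Real.sqrt (Real.pi * D * tc) ^ 2 = Real.pi * D * tc :=
      Real.sq_sqrt (by positivity)
    set u := Real.sqrt (Real.pi * D * t)
    set v := Real.sqrt (Real.pi * D * tc)
    have heqt' : 4 * lam * a * u ^ 2 + 8 * a ^ 2 * lam * u = 1 := by
      rw [hu2]; linear_combination heqt
    have heq' : 4 * lam * a * v ^ 2 + 8 * a ^ 2 * lam * v = 1 := by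
      rw [hv2]; linear_combination heq
    have hfac : (u - v) * (4 * lam * a * (u + v) + 8 * a ^ 2 * lam) = 0 := by
      linear_combination heqt' - heq'
    have hpos : 0 < 4 * lam * a * (u + v) + 8 * a ^ 2 * lam := by
      have h1 : 0 ≤ 4 * lam * a * (u + v) := mul_nonneg (by positivity) (by linarith)
      have h2 : 0 < 8 * a ^ 2 * lam := by positivity
      linarith
    have key : u = v := by
      rcases mul_eq_zero.mp hfac with h | h
      · linarith
      · linarith
    have : Real.pi * D * t = Real.pi * D * tc := by rw [← hu2, ← hv2, key]
    have hpiD : Real.pi * D ≠ 0 := by positivity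
    exact mul_left_cancel₀ hpiD this
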